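/- Let x₁, x₂ be unit dual quaternions (star x₁ * x₁ = 1 and star x₂ * x₂ = 1) and let v be a skew-adjoint dual quaternion (star v = -v) such that exp v = (star x₁) * x₂. Then the screw linear interpolation path x(τ) = x₁ * exp(τ • v), for τ ∈ ℝ, satisfies: (i) x(0) = x₁, (ii) x(1) = x₂, and (iii) for every τ, x(τ) is a unit dual quaternion, i.e. star (x(τ)) * x(τ) = 1. -/

import Mathlib

open Quaternion

/-- Componentwise star (quaternion conjugation on primary and dual parts)
on the dual quaternions `DualNumber ℍ[ℝ]`. -/
noncomputable instance : Star (DualNumber ℍ[ℝ]) :=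
  ⟨fun x => TrivSqZeroExt.inl (star x.fst) + TrivSqZeroExt.inr (star x.snd)⟩

@[simp] theorem DualQuaternion.fst_star (x : DualNumber ℍ[ℝ]) :
    (star x).fst = star x.fst := by
  show (TrivSqZeroExt.inl (star x.fst) + TrivSqZeroExt.inr (star x.snd)).fst = _
  simp

@[simp] theorem DualQuaternion.snd_star (x : DualNumber ℍ[ℝ]) :
    (star x).snd = star x.snd := by
  show (TrivSqZeroExt.inl (star x.fst) + TrivSqZeroExt.inr (star x.snd)).snd = _
  simp

noncomputable instance : StarRing (DualNumber ℍ[ℝ]) where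
  star_involutive x := TrivSqZeroExt.ext (by simp) (by simp)
  star_mul x y := TrivSqZeroExt.ext (by simp [TrivSqZeroExt.fst_mul])
    (by
      simp [TrivSqZeroExt.snd_mul, MulOpposite.smul_eq_mul_unop, smul_eq_mul]
      abel)
  star_add x y := TrivSqZeroExt.ext (by simp) (by simp)
/-- **ScLERP endpoints and unitness.**  If `x₁`, `x₂` are unit dual quaternions,
`v` is a skew-adjoint dual quaternion with `exp v = star x₁ * x₂`, then the
screw linear interpolation path `x(τ) = x₁ * exp (τ • v)` starts at `x₁`,
ends at `x₂`, and consists of unit dual quaternions. -/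
noncomputable instance : ContinuousStar (DualNumber ℍ[ℝ]) :=
  ⟨(TrivSqZeroExt.continuous_inl.comp
      (continuous_star.comp TrivSqZeroExt.continuous_fst)).add
    (TrivSqZeroExt.continuous_inr.comp
      (continuous_star.comp TrivSqZeroExt.continuous_snd))⟩

theorem DualQuaternion.star_smul (r : ℝ) (x : DualNumber ℍ[ℝ]) :
    star (r • x) = r • star x :=
  TrivSqZeroExt.ext (by simp) (by simp)

theorem DualQuaternion.mul_star_self (x : DualNumber ℍ[ℝ])
    (hx : star x * x = 1) : x * star x = 1 := by
  have hfst : star x.fst * x.fst = 1 := by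
    have := congrArg TrivSqZeroExt.fst hx
    simpa [TrivSqZeroExt.fst_mul] using this
  have hu : IsUnit x := by
    rw [TrivSqZeroExt.isUnit_iff_isUnit_fst]
    have hne : x.fst ≠ 0 := fun h => by simp [h] at hfst
    exact isUnit_iff_ne_zero.mpr hne
  have h2 : (x * star x) * x = 1 * x := by rw [mul_assoc, hx, mul_one, one_mul]
  exact hu.mul_right_cancel h2

set_option maxHeartbeats 1000000 in
theorem sclerp_endpoints_and_unit (x₁ x₂ v : DualNumber ℍ[ℝ])
    (hx₁ : star x₁ * x₁ = 1) (hx₂ : star x₂ * x₂ = 1)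
    (hv : star v = -v)
    (hexp : NormedSpace.exp v = star x₁ * x₂) :
    x₁ * NormedSpace.exp ((0 : ℝ) • v) = x₁ ∧
    x₁ * NormedSpace.exp ((1 : ℝ) • v) = x₂ ∧
    ∀ τ : ℝ, star (x₁ * NormedSpace.exp (τ • v)) * (x₁ * NormedSpace.exp (τ • v)) = 1 := by
  have hstar_exp : ∀ τ : ℝ, star (NormedSpace.exp (τ • v)) = NormedSpace.exp (-(τ • v)) := by
    intro τ
    rw [NormedSpace.star_exp, DualQuaternion.star_smul, hv, smul_neg]
  have hunit : ∀ τ : ℝ, star (NormedSpace.exp (τ • v)) * NormedSpace.exp (τ • v) = 1 := by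
    intro τ
    rw [hstar_exp,
      ← NormedSpace.exp_add_of_commute_of_mem_ball (𝕂 := ℝ) (Commute.neg_left (Commute.refl (τ • v)))
        (by rw [NormedSpace.expSeries_radius_eq_top]; exact edist_lt_top _ _)
        (by rw [NormedSpace.expSeries_radius_eq_top]; exact edist_lt_top _ _),
      neg_add_cancel, NormedSpace.exp_zero]
  refine ⟨?_, ?_, ?_⟩
  · rw [zero_smul, NormedSpace.exp_zero, mul_one]
  · rw [one_smul, hexp, ← mul_assoc, DualQuaternion.mul_star_self x₁ hx₁, one_mul]
  · intro τ
    rw [star_mul, mul_assoc, ← mul_assoc (star x₁), hx₁, one_mul, hunit]
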